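/- Let H be a group and a, b ∈ H. Then every element of the normal closure of {a} commutes with every element of the normal closure of {b} (i.e., ∀ x ∈ Subgroup.normalClosure {a}, ∀ y ∈ Subgroup.normalClosure {b}, x * y = y * x) if and only if ∀ g ∈ H, ⁅g⁻¹ * a * g, b⁆ = 1. -/

import Mathlib

open scoped commutatorElement

lemma centralizer_normal_of_normal {H : Type*} [Group H] (N : Subgroup H) [hN : N.Normal] :
    (Subgroup.centralizer (N : Set H)).Normal := by
  constructor
  intro c hc g
  rw [Subgroup.mem_centralizer_iff] at hc ⊢
  intro n hn
  have h1 : g⁻¹ * n * g ∈ N := by simpa using hN.conj_mem n hn g⁻¹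
  calc n * (g * c * g⁻¹) = g * ((g⁻¹ * n * g) * c) * g⁻¹ := by group
    _ = g * (c * (g⁻¹ * n * g)) * g⁻¹ := by rw [hc _ h1]
    _ = (g * c * g⁻¹) * n := by group

theorem normalClosure_commute_iff_conj_commutator
    (H : Type*) [Group H] (a b : H) :
    (∀ x ∈ Subgroup.normalClosure {a}, ∀ y ∈ Subgroup.normalClosure {b}, x * y = y * x) ↔
    (∀ g : H, ⁅g⁻¹ * a * g, b⁆ = 1) := by
  constructor
  · intro h g
    have hx : g⁻¹ * a * g ∈ Subgroup.normalClosure ({a} : Set H) := by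
      have ha : a ∈ Subgroup.normalClosure ({a} : Set H) :=
        Subgroup.subset_normalClosure rfl
      simpa [mul_assoc] using Subgroup.normalClosure_normal.conj_mem a ha g⁻¹
    have hb : b ∈ Subgroup.normalClosure ({b} : Set H) :=
      Subgroup.subset_normalClosure rfl
    exact commutatorElement_eq_one_iff_mul_comm.mpr (h _ hx _ hb)
  · intro h x hx y hy
    have hbc : Subgroup.normalClosure ({b} : Set H) ≤ Subgroup.centralizer {a} := by
      refine (Subgroup.closure_le _).mpr ?_
      intro z hz
      rcases Group.mem_conjugatesOfSet_iff.mp hz with ⟨w, hw, hconj⟩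
      rw [Set.mem_singleton_iff] at hw; subst hw
      rcases isConj_iff.mp hconj with ⟨c, rfl⟩
      rw [SetLike.mem_coe, Subgroup.mem_centralizer_singleton_iff]
      have := commutatorElement_eq_one_iff_mul_comm.mp (h c)
      -- this : (c⁻¹ * a * c) * w = w * (c⁻¹ * a * c)
      calc (c * w * c⁻¹) * a = c * (w * (c⁻¹ * a * c)) * c⁻¹ := by group
        _ = c * ((c⁻¹ * a * c) * w) * c⁻¹ := by rw [this]
        _ = a * (c * w * c⁻¹) := by group
    have haC : a ∈ Subgroup.centralizer (Subgroup.normalClosure ({b} : Set H) : Set H) := by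
      rw [Subgroup.mem_centralizer_iff]
      intro z hz
      exact Subgroup.mem_centralizer_singleton_iff.mp (hbc hz)
    haveI : (Subgroup.centralizer (Subgroup.normalClosure ({b} : Set H) : Set H)).Normal :=
      centralizer_normal_of_normal _
    have haN := Subgroup.normalClosure_le_normal (Set.singleton_subset_iff.mpr haC) hx
    rw [Subgroup.mem_centralizer_iff] at haN
    exact (haN y hy).symm
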